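/- Let R be a subring of a commutative ring T with a common ideal C containing a T-regular element, and assume T is flat over R and C is a principal ideal of T. Then for every ideal I of R, the natural multiplication map C ⊗_R I → I is injective. -/

import Mathlib

set_option maxHeartbeats 800000

/-- condition (FP). For every ideal `I` of `R`, the natural
multiplication map `C ⊗[R] I → I` (landing in `R`), `x ⊗ i ↦ x * i`, is injective. -/
theorem stmt_4 (T : Type*) [CommRing T] (R : Subring T) (C : Ideal T)
    (hCR : (C : Set T) ⊆ (R : Set T))
    (hreg : ∃ c ∈ C, c ∈ nonZeroDivisors T)
    (hflat : Module.Flat ↥R T) (hprin : C.IsPrincipal)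
    (I : Ideal ↥R) :
    Function.Injective
      (Submodule.mulMap (Ideal.comap (algebraMap ↥R T) C) I) := by
  obtain ⟨c, hcC, hcreg⟩ := hreg
  obtain ⟨g, hg⟩ := hprin
  set M : Ideal ↥R := Ideal.comap (algebraMap ↥R T) C with hM
  have hgC : g ∈ C := hg ▸ Ideal.subset_span rfl
  have hgreg : g ∈ nonZeroDivisors T := by
    rw [hg, Ideal.submodule_span_eq, Ideal.mem_span_singleton'] at hcC
    obtain ⟨a, ha⟩ := hcC
    refine mem_nonZeroDivisors_iff.mpr ⟨fun x hx => (mem_nonZeroDivisors_iff.mp hcreg).1 x (by rw [← ha, mul_assoc, hx, mul_zero]), fun x hx => ?_⟩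
    exact (mem_nonZeroDivisors_iff.mp hcreg).2 x (by rw [← ha, show x * (a * g) = (x * g) * a by ring, hx, zero_mul])
  have hmem : ∀ t : T, (⟨g * t, hCR (C.mul_mem_right t hgC)⟩ : ↥R) ∈ M := fun t =>
    Ideal.mem_comap.2 (by exact C.mul_mem_right t hgC)
  let φ : T →ₗ[↥R] ↥M :=
    { toFun := fun t => ⟨⟨g * t, hCR (C.mul_mem_right t hgC)⟩, hmem t⟩
      map_add' := by intro x y; ext; simp [mul_add]
      map_smul' := by
        intro r x; ext
        simp [Algebra.smul_def, Algebra.algebraMap_ofSubring]; ring }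
  have hφbij : Function.Bijective φ := by
    constructor
    · intro x y hxy
      have h : g * x = g * y := congrArg (fun z : ↥M => ((z : ↥R) : T)) hxy
      exact (mul_cancel_left_mem_nonZeroDivisors hgreg).mp h
    · rintro ⟨⟨x, hxR⟩, hxM⟩
      have hx : x ∈ C := hxM
      rw [hg, Ideal.submodule_span_eq, Ideal.mem_span_singleton'] at hx
      obtain ⟨a, ha⟩ := hx
      exact ⟨a, by ext; simpa [φ, mul_comm] using ha⟩
  haveI : Module.Flat ↥R ↥M :=
    Module.Flat.of_linearEquiv (LinearEquiv.ofBijective φ hφbij).symm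
  have key : Submodule.mulMap M I =
      M.subtype ∘ₗ (TensorProduct.rid ↥R ↥M).toLinearMap ∘ₗ
        LinearMap.lTensor ↥M I.subtype := by
    ext m i
    simp only [LinearMap.coe_comp, Function.comp_apply, LinearMap.lTensor_tmul,
      LinearEquiv.coe_coe, TensorProduct.rid_tmul, Submodule.coe_subtype,
      Submodule.mulMap_tmul, TensorProduct.AlgebraTensorModule.curry_apply,
      TensorProduct.curry_apply, LinearMap.coe_restrictScalars, SetLike.val_smul,
      smul_eq_mul]
    exact mul_comm _ _
  rw [key]
  exact M.injective_subtype.comp ((TensorProduct.rid ↥R ↥M).injective.comp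
    (Module.Flat.lTensor_preserves_injective_linearMap I.subtype I.injective_subtype))
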